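/- Let Z : ℝ³ → ℝ³ be differentiable a.e. with |DZ(x)| ≤ ν max{L, λ} e^{x₃} a.e., and suppose Z is locally Lipschitz. Then for all y₁, y₂ ∈ B(0, r) and n ≥ 1: |Zⁿ(y₁) − Zⁿ(y₂)| ≤ ∏_{k=0}^{n−1} (sup_{x ∈ B(0,r)} ν max{L,λ} e^{p₃(Zᵏ(x))}) · |y₁ − y₂|. In particular, if νλ sup_{x∈B(0,r)} e^{p₃(Zⁿ(x))} = E^{n+1}(r) where E(t) = νλ e^t, then |Zⁿ(y₁) − Zⁿ(y₂)| ≤ (max{L,λ}/λ)ⁿ E(r) E²(r) ⋯ Eⁿ(r) |y₁ − y₂|. -/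

import Mathlib

open Finset MeasureTheory Metric Set Filter
open scoped Convolution NNReal Topology

local notation "E3" => EuclideanSpace ℝ (Fin 3)


lemma abs_coord_le (y : E3) (i : Fin 3) : |y i| ≤ ‖y‖ := by
  have := EuclideanSpace.norm_eq y
  rw [this]
  have h1 : |y i| = Real.sqrt (‖y i‖ ^ 2) := by
    rw [Real.sqrt_sq_eq_abs]; simp [abs_abs]
  rw [h1]
  apply Real.sqrt_le_sqrt
  exact Finset.single_le_sum (f := fun j => ‖y j‖ ^ 2) (fun j _ => by positivity) (Finset.mem_univ i)

lemma lip_on_compact {Z : E3 → E3} (hlip : LocallyLipschitz Z) {K : Set E3}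
    (hK : IsCompact K) : ∃ M : ℝ, 0 ≤ M ∧ LipschitzOnWith M.toNNReal Z K := by
  choose Kc t ht hlipt using hlip
  have hcov : K ⊆ ⋃ x : E3, interior (t x) := fun z _ =>
    Set.mem_iUnion.2 ⟨z, mem_interior_iff_mem_nhds.2 (ht z)⟩
  obtain ⟨s, hs⟩ := hK.elim_finite_subcover (fun x => interior (t x))
    (fun x => isOpen_interior) hcov
  have hs' : K ⊆ ⋃ i : s, interior (t i) := by
    intro z hz
    obtain ⟨i, hi, hzi⟩ := Set.mem_iUnion₂.1 (hs hz)
    exact Set.mem_iUnion.2 ⟨⟨i, hi⟩, hzi⟩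
  obtain ⟨δ, hδ, hball⟩ := lebesgue_number_lemma_of_metric hK
    (fun i : s => isOpen_interior) hs'
  -- diameter bound
  have hZc : Continuous Z := LocallyLipschitz.continuous (fun x => ⟨Kc x, t x, ht x, hlipt x⟩)
  obtain ⟨C, hC⟩ := Metric.isBounded_iff.1 (hK.image hZc).isBounded
  set M₀ : NNReal := s.sup Kc with hM₀
  set M : ℝ := max (M₀ : ℝ) (max C 0 / δ) with hMdef
  refine ⟨M, le_trans M₀.coe_nonneg (le_max_left _ _), ?_⟩
  rw [lipschitzOnWith_iff_dist_le_mul]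
  have hM0 : 0 ≤ M := le_trans M₀.coe_nonneg (le_max_left _ _)
  intro a ha b hb
  rw [Real.coe_toNNReal _ hM0]
  rcases lt_or_ge (dist a b) δ with hlt | hge
  · obtain ⟨i, hi⟩ := hball a ha
    have hai : a ∈ t i := interior_subset (hi (Metric.mem_ball_self hδ))
    have hbi : b ∈ t i := interior_subset (hi (by simpa [Metric.mem_ball, dist_comm] using hlt))
    have := (lipschitzOnWith_iff_dist_le_mul.1 (hlipt i)) a hai b hbi
    refine this.trans (mul_le_mul_of_nonneg_right ?_ dist_nonneg)
    calc (Kc i : ℝ) ≤ (M₀ : ℝ) := by exact_mod_cast Finset.le_sup i.2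
      _ ≤ M := le_max_left _ _
  · have h1 : dist (Z a) (Z b) ≤ max C 0 :=
      le_trans (hC ⟨a, ha, rfl⟩ ⟨b, hb, rfl⟩) (le_max_left _ _)
    have h2 : max C 0 ≤ (max C 0 / δ) * dist a b := by
      rw [div_mul_eq_mul_div, le_div_iff₀ hδ]
      exact mul_le_mul_of_nonneg_left hge (le_max_right _ _)
    exact h1.trans (h2.trans (mul_le_mul_of_nonneg_right (le_max_right _ _) dist_nonneg))

lemma ae_diff_of_locallyLipschitz {Z : E3 → E3} (hlip : LocallyLipschitz Z) :
    ∀ᵐ x : E3 ∂volume, DifferentiableAt ℝ Z x := by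
  have h : ∀ n : ℕ, ∀ᵐ x : E3 ∂volume, x ∈ Metric.ball (0 : E3) n → DifferentiableAt ℝ Z x := by
    intro n
    obtain ⟨M, _, hM⟩ := lip_on_compact hlip (isCompact_closedBall (0 : E3) n)
    filter_upwards [hM.ae_differentiableWithinAt_of_mem] with x hx hxball
    exact (hx (Metric.ball_subset_closedBall hxball)).differentiableAt
      (Filter.mem_of_superset (Metric.isOpen_ball.mem_nhds hxball) Metric.ball_subset_closedBall)
  filter_upwards [MeasureTheory.ae_all_iff.2 h] with x hx
  obtain ⟨n, hn⟩ := exists_nat_gt ‖x‖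
  exact hx n (by simpa [Metric.mem_ball] using hn)

set_option maxHeartbeats 2000000 in
lemma key_smooth {Z : E3 → E3} (hlip : LocallyLipschitz Z) {c : ℝ} (hc : 0 ≤ c)
    (hder : ∀ᵐ x : E3 ∂volume, ‖fderiv ℝ Z x‖ ≤ c * Real.exp (x 2))
    (a b : E3) {δ : ℝ} (hδ0 : 0 < δ) (hδ1 : δ ≤ 1)
    {M : ℝ} (hM0 : 0 ≤ M) (hM : LipschitzOnWith M.toNNReal Z (Metric.closedBall a 1))
    {N : ℝ} (hN0 : 0 ≤ N) (hN : LipschitzOnWith N.toNNReal Z (Metric.closedBall b 1)) :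
    dist (Z a) (Z b) ≤ c * Real.exp (max (a 2) (b 2) + δ) * dist a b + (M + N) * δ := by
  have hZc : Continuous Z := hlip.continuous
  have hZl : LocallyIntegrable Z (volume : Measure E3) := hZc.locallyIntegrable
  set φ : ContDiffBump (0 : E3) := ⟨δ/2, δ, by positivity, by linarith⟩ with hφ
  set ψ : E3 → ℝ := φ.normed volume with hψ
  have hψc : Continuous ψ := φ.continuous_normed
  have hψ0 : ∀ y, 0 ≤ ψ y := fun y => φ.nonneg_normed y
  have hψsupp : ∀ y : E3, ψ y ≠ 0 → ‖y‖ < δ := by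
    intro y hy
    have : y ∈ Function.support ψ := hy
    rw [hψ, φ.support_normed_eq] at this
    simpa [hφ] using mem_ball_zero_iff.1 this
  set g : E3 → E3 := ψ ⋆[ContinuousLinearMap.lsmul ℝ ℝ, volume] Z with hg
  have hint : ∀ w : E3, Integrable (fun y => ψ y • Z (w - y)) (volume : Measure E3) := by
    intro w
    apply Continuous.integrable_of_hasCompactSupport
    · exact hψc.smul (hZc.comp (continuous_const.sub continuous_id))
    · exact (φ.hasCompactSupport_normed).smul_right
  have gdef : ∀ w : E3, g w = ∫ y, ψ y • Z (w - y) := by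
    intro w
    rw [hg, convolution_def]
    simp only [ContinuousLinearMap.lsmul_apply]
  have hg_diff : ∀ x : E3, DifferentiableAt ℝ g x := fun x =>
    (HasCompactSupport.hasFDerivAt_convolution_left _ φ.hasCompactSupport_normed
      (φ.contDiff_normed (n := 1)) hZl x).differentiableAt
  have hG : ∀ᵐ z : E3 ∂volume, DifferentiableAt ℝ Z z ∧ ‖fderiv ℝ Z z‖ ≤ c * Real.exp (z 2) :=
    (ae_diff_of_locallyLipschitz hlip).and hder
  have htrans : ∀ x : E3, ∀ᵐ y : E3 ∂volume,
      DifferentiableAt ℝ Z (x - y) ∧ ‖fderiv ℝ Z (x - y)‖ ≤ c * Real.exp ((x - y) 2) := fun x =>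
    (MeasureTheory.Measure.measurePreserving_sub_left volume x).quasiMeasurePreserving.ae hG
  -- the derivative of the mollified map
  have hDval : ∀ (x v : E3), fderiv ℝ g x v = ∫ y, ψ y • (fderiv ℝ Z (x - y)) v := by
    intro x v
    obtain ⟨P, hP0, hP⟩ := lip_on_compact hlip (isCompact_closedBall x (1 + ‖v‖))
    have hPd := lipschitzOnWith_iff_dist_le_mul.1 hP
    rw [Real.coe_toNNReal _ hP0] at hPd
    have hmeas : ∀ᶠ t in (𝓝[≠] (0:ℝ)), AEStronglyMeasurable
        (fun y : E3 => ψ y • (t⁻¹ • (Z (x - y + t • v) - Z (x - y)))) volume := by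
      refine Eventually.of_forall fun t => Continuous.aestronglyMeasurable ?_
      exact hψc.smul ((by fun_prop : Continuous fun y : E3 => t⁻¹ • (Z (x - y + t • v) - Z (x - y))))
    have hbound : ∀ᶠ t in 𝓝[≠] (0:ℝ), ∀ᵐ y : E3 ∂volume,
        ‖ψ y • (t⁻¹ • (Z (x - y + t • v) - Z (x - y)))‖ ≤ ψ y * (P * ‖v‖) := by
      have h1 : ∀ᶠ t in 𝓝 (0:ℝ), |t| ≤ 1 := by
        filter_upwards [Metric.ball_mem_nhds (0:ℝ) one_pos] with t ht
        simpa [Real.dist_eq] using (mem_ball.1 ht).le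
      filter_upwards [h1.filter_mono nhdsWithin_le_nhds, self_mem_nhdsWithin]
        with t ht1 (htne : t ≠ 0)
      refine Eventually.of_forall fun y => ?_
      rcases eq_or_ne (ψ y) 0 with h0 | h0
      · simp [h0, mul_nonneg (mul_nonneg hP0 (norm_nonneg v)), hψ0 y,
          mul_nonneg hP0 (norm_nonneg v)]
      · have hyn : ‖y‖ < δ := hψsupp y h0
        have m1 : x - y + t • v ∈ Metric.closedBall x (1 + ‖v‖) := by
          rw [Metric.mem_closedBall, dist_eq_norm]
          have e : x - y + t • v - x = -y + t • v := by abel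
          rw [e]
          calc ‖-y + t • v‖ ≤ ‖-y‖ + ‖t • v‖ := norm_add_le _ _
            _ = ‖y‖ + |t| * ‖v‖ := by rw [norm_neg, norm_smul, Real.norm_eq_abs]
            _ ≤ 1 + 1 * ‖v‖ := by
                have := hyn.le.trans hδ1
                have := mul_le_mul_of_nonneg_right ht1 (norm_nonneg v)
                linarith
            _ = 1 + ‖v‖ := by ring
        have m2 : x - y ∈ Metric.closedBall x (1 + ‖v‖) := by
          rw [Metric.mem_closedBall, dist_eq_norm]
          have e : x - y - x = -y := by abel
          rw [e, norm_neg]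
          have := hyn.le.trans hδ1
          have := norm_nonneg v
          linarith
        have hd : ‖Z (x - y + t • v) - Z (x - y)‖ ≤ P * (|t| * ‖v‖) := by
          have h := hPd _ m1 _ m2
          rw [dist_eq_norm] at h
          have e : x - y + t • v - (x - y) = t • v := by abel
          have e2 : dist (x - y + t • v) (x - y) = |t| * ‖v‖ := by
            rw [dist_eq_norm, e, norm_smul, Real.norm_eq_abs]
          rw [e2] at h
          exact h
        rw [norm_smul, norm_smul, Real.norm_eq_abs, Real.norm_eq_abs,
          abs_of_nonneg (hψ0 y)]
        have htpos : (0:ℝ) < |t| := abs_pos.2 htne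
        have : |t⁻¹| * ‖Z (x - y + t • v) - Z (x - y)‖ ≤ P * ‖v‖ := by
          rw [abs_inv]
          rw [inv_mul_le_iff₀ htpos]
          calc ‖Z (x - y + t • v) - Z (x - y)‖ ≤ P * (|t| * ‖v‖) := hd
            _ = |t| * (P * ‖v‖) := by ring
        exact mul_le_mul_of_nonneg_left this (hψ0 y)
    have hlim : ∀ᵐ y : E3 ∂volume, Tendsto
        (fun t : ℝ => ψ y • (t⁻¹ • (Z (x - y + t • v) - Z (x - y)))) (𝓝[≠] (0:ℝ))
        (𝓝 (ψ y • (fderiv ℝ Z (x - y)) v)) := by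
      filter_upwards [htrans x] with y hy
      obtain ⟨hy1, _⟩ := hy
      have h₁ : HasDerivAt (fun s : ℝ => x - y + s • v) v 0 := by
        simpa using ((hasDerivAt_id (0:ℝ)).smul_const v).const_add (x - y)
      have hcurve : HasDerivAt (fun s : ℝ => Z (x - y + s • v)) ((fderiv ℝ Z (x - y)) v) 0 := by
        have hfd : HasFDerivAt Z (fderiv ℝ Z (x - y)) (x - y + (0:ℝ) • v) := by
          simpa using hy1.hasFDerivAt
        exact hfd.comp_hasDerivAt (x := (0:ℝ)) h₁
      have hslope := hasDerivAt_iff_tendsto_slope.1 hcurve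
      have hsl : slope (fun s : ℝ => Z (x - y + s • v)) 0
          = fun t : ℝ => t⁻¹ • (Z (x - y + t • v) - Z (x - y)) := by
        funext t
        simp [slope, sub_zero]
      rw [hsl] at hslope
      exact hslope.const_smul (ψ y)
    have hDCT := MeasureTheory.tendsto_integral_filter_of_dominated_convergence
      (μ := (volume : Measure E3)) (l := 𝓝[≠] (0:ℝ))
      (F := fun t y => ψ y • (t⁻¹ • (Z (x - y + t • v) - Z (x - y))))
      (f := fun y => ψ y • (fderiv ℝ Z (x - y)) v) (bound := fun y => ψ y * (P * ‖v‖))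
      hmeas hbound ((φ.integrable_normed).mul_const _) hlim
    have heq : ∀ᶠ t in 𝓝[≠] (0:ℝ),
        (∫ y, ψ y • (t⁻¹ • (Z (x - y + t • v) - Z (x - y))))
          = t⁻¹ • (g (x + t • v) - g x) := by
      filter_upwards [self_mem_nhdsWithin] with t (htne : t ≠ 0)
      have e1 : (fun y : E3 => ψ y • (t⁻¹ • (Z (x - y + t • v) - Z (x - y))))
          = fun y => t⁻¹ • (ψ y • Z ((x + t • v) - y) - ψ y • Z (x - y)) := by
        funext y
        have e : x - y + t • v = (x + t • v) - y := by abel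
        rw [e, smul_comm (ψ y) t⁻¹, smul_sub (ψ y)]
      rw [e1, integral_smul, integral_sub (hint (x + t • v)) (hint x), gdef (x + t • v), gdef x]
    have hgd : HasDerivAt (fun t : ℝ => g (x + t • v)) ((fderiv ℝ g x) v) 0 := by
      have h₁ : HasDerivAt (fun s : ℝ => x + s • v) v 0 := by
        simpa using ((hasDerivAt_id (0:ℝ)).smul_const v).const_add x
      have hfd : HasFDerivAt g (fderiv ℝ g x) (x + (0:ℝ) • v) := by
        simpa using (hg_diff x).hasFDerivAt
      exact hfd.comp_hasDerivAt (x := (0:ℝ)) h₁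
    have h3 := hasDerivAt_iff_tendsto_slope.1 hgd
    have hsl : slope (fun s : ℝ => g (x + s • v)) 0
        = fun t : ℝ => t⁻¹ • (g (x + t • v) - g x) := by
      funext t
      simp [slope, sub_zero]
    rw [hsl] at h3
    exact tendsto_nhds_unique h3 (Filter.Tendsto.congr' heq hDCT)
  -- norm bound on the derivative of g
  have hDnorm : ∀ x : E3, ‖fderiv ℝ g x‖ ≤ c * Real.exp (x 2 + δ) := by
    intro x
    refine ContinuousLinearMap.opNorm_le_bound _ (by positivity) fun v => ?_
    rw [hDval x v]
    calc ‖∫ y, ψ y • (fderiv ℝ Z (x - y)) v‖ ≤ ∫ y, ‖ψ y • (fderiv ℝ Z (x - y)) v‖ :=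
          norm_integral_le_integral_norm _
      _ ≤ ∫ y, ψ y * (c * Real.exp (x 2 + δ) * ‖v‖) := by
          refine integral_mono_of_nonneg (Eventually.of_forall fun y => norm_nonneg _)
            ((φ.integrable_normed).mul_const _) ?_
          filter_upwards [htrans x] with y hy
          obtain ⟨_, hy2⟩ := hy
          rcases eq_or_ne (ψ y) 0 with h0 | h0
          · simp only [h0, zero_smul, norm_zero, zero_mul]
            positivity
          · have hyn : ‖y‖ < δ := hψsupp y h0
            have hcoord : (x - y) 2 ≤ x 2 + δ := by
              have h1 : (x - y) 2 = x 2 - y 2 := rfl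
              have h2 : |y 2| ≤ ‖y‖ := abs_coord_le y 2
              rw [h1]
              have := abs_le.1 h2
              linarith
            have hbd : ‖(fderiv ℝ Z (x - y)) v‖ ≤ c * Real.exp (x 2 + δ) * ‖v‖ := by
              calc ‖(fderiv ℝ Z (x - y)) v‖ ≤ ‖fderiv ℝ Z (x - y)‖ * ‖v‖ :=
                    ContinuousLinearMap.le_opNorm _ _
                _ ≤ (c * Real.exp ((x - y) 2)) * ‖v‖ :=
                    mul_le_mul_of_nonneg_right hy2 (norm_nonneg v)
                _ ≤ c * Real.exp (x 2 + δ) * ‖v‖ := by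
                    have := Real.exp_le_exp.2 hcoord
                    have h3 : c * Real.exp ((x - y) 2) ≤ c * Real.exp (x 2 + δ) :=
                      mul_le_mul_of_nonneg_left this hc
                    exact mul_le_mul_of_nonneg_right h3 (norm_nonneg v)
            rw [norm_smul, Real.norm_eq_abs, abs_of_nonneg (hψ0 y)]
            exact mul_le_mul_of_nonneg_left hbd (hψ0 y)
      _ = c * Real.exp (x 2 + δ) * ‖v‖ := by
          rw [MeasureTheory.integral_mul_const, φ.integral_normed, one_mul]
  -- mean value inequality for g on the segment [a, b]
  have hseg : ∀ w ∈ segment ℝ a b, w 2 ≤ max (a 2) (b 2) := by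
    rintro w ⟨u, t, hu, ht, hut, rfl⟩
    have e : (u • a + t • b) 2 = u * a 2 + t * b 2 := rfl
    rw [e]
    calc u * a 2 + t * b 2 ≤ u * max (a 2) (b 2) + t * max (a 2) (b 2) := by
          gcongr
          · exact le_max_left _ _
          · exact le_max_right _ _
      _ = max (a 2) (b 2) := by rw [← add_mul, hut, one_mul]
  have hmvt : ‖g b - g a‖ ≤ c * Real.exp (max (a 2) (b 2) + δ) * ‖b - a‖ := by
    refine (convex_segment a b).norm_image_sub_le_of_norm_fderiv_le
      (fun w _ => hg_diff w) (fun w hw => ?_)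
      (left_mem_segment ℝ a b) (right_mem_segment ℝ a b)
    refine (hDnorm w).trans ?_
    have := Real.exp_le_exp.2 (add_le_add_left (hseg w hw) δ)
    exact mul_le_mul_of_nonneg_left this hc
  -- closeness of g to Z
  have hclose : ∀ (w : E3) (Q : ℝ), 0 ≤ Q → LipschitzOnWith Q.toNNReal Z (Metric.closedBall w 1) →
      ‖g w - Z w‖ ≤ Q * δ := by
    intro w Q hQ0 hQ
    have hQd := lipschitzOnWith_iff_dist_le_mul.1 hQ
    rw [Real.coe_toNNReal _ hQ0] at hQd
    have hZw : Z w = ∫ y : E3, ψ y • Z w := by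
      rw [integral_smul_const, φ.integral_normed, one_smul]
    rw [gdef w, hZw, ← integral_sub (hint w) ((φ.integrable_normed).smul_const _)]
    calc ‖∫ y, (ψ y • Z (w - y) - ψ y • Z w)‖ ≤ ∫ y, ‖ψ y • Z (w - y) - ψ y • Z w‖ :=
          norm_integral_le_integral_norm _
      _ ≤ ∫ y, ψ y * (Q * δ) := by
          refine integral_mono_of_nonneg (Eventually.of_forall fun y => norm_nonneg _)
            ((φ.integrable_normed).mul_const _) (Eventually.of_forall fun y => ?_)
          rcases eq_or_ne (ψ y) 0 with h0 | h0
          · simp only [h0, zero_smul, sub_zero, norm_zero, zero_mul]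
            positivity
          · have hyn : ‖y‖ < δ := hψsupp y h0
            have m1 : w - y ∈ Metric.closedBall w 1 := by
              rw [Metric.mem_closedBall, dist_eq_norm]
              have e : w - y - w = -y := by abel
              rw [e, norm_neg]
              exact hyn.le.trans hδ1
            have hd : ‖Z (w - y) - Z w‖ ≤ Q * δ := by
              have h := hQd _ m1 _ (Metric.mem_closedBall_self zero_le_one)
              rw [dist_eq_norm] at h
              have e2 : dist (w - y) w = ‖y‖ := by
                rw [dist_eq_norm]
                have e : w - y - w = -y := by abel
                rw [e, norm_neg]
              rw [e2] at h
              exact h.trans (mul_le_mul_of_nonneg_left hyn.le hQ0)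
            show ‖ψ y • Z (w - y) - ψ y • Z w‖ ≤ ψ y * (Q * δ)
            rw [← smul_sub, norm_smul, Real.norm_eq_abs, abs_of_nonneg (hψ0 y)]
            exact mul_le_mul_of_nonneg_left hd (hψ0 y)
      _ = Q * δ := by rw [MeasureTheory.integral_mul_const, φ.integral_normed, one_mul]
  -- putting everything together
  have h1 : ‖g a - Z a‖ ≤ M * δ := hclose a M hM0 hM
  have h2 : ‖g b - Z b‖ ≤ N * δ := hclose b N hN0 hN
  calc dist (Z a) (Z b) ≤ dist (Z a) (g a) + dist (g a) (g b) + dist (g b) (Z b) :=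
        dist_triangle4 _ _ _ _
    _ ≤ M * δ + c * Real.exp (max (a 2) (b 2) + δ) * dist a b + N * δ := by
        gcongr
        · rw [dist_eq_norm, norm_sub_rev]
          exact h1
        · rw [dist_eq_norm, dist_eq_norm, norm_sub_rev (g a), norm_sub_rev a]
          exact hmvt
        · rw [dist_eq_norm]
          exact h2
    _ = c * Real.exp (max (a 2) (b 2) + δ) * dist a b + (M + N) * δ := by ring

lemma mvt_ae {Z : E3 → E3} (hlip : LocallyLipschitz Z) {c : ℝ} (hc : 0 ≤ c)
    (hder : ∀ᵐ x : E3 ∂volume, ‖fderiv ℝ Z x‖ ≤ c * Real.exp (x 2)) (a b : E3) :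
    dist (Z a) (Z b) ≤ c * max (Real.exp (a 2)) (Real.exp (b 2)) * dist a b := by
  obtain ⟨M, hM0, hM⟩ := lip_on_compact hlip (isCompact_closedBall a 1)
  obtain ⟨N, hN0, hN⟩ := lip_on_compact hlip (isCompact_closedBall b 1)
  have hb : ∀ δ ∈ Set.Ioc (0:ℝ) 1, dist (Z a) (Z b)
      ≤ c * Real.exp (max (a 2) (b 2) + δ) * dist a b + (M + N) * δ :=
    fun δ hδ => key_smooth hlip hc hder a b hδ.1 hδ.2 hM0 hM hN0 hN
  have hcont : Tendsto (fun δ : ℝ => c * Real.exp (max (a 2) (b 2) + δ) * dist a b + (M + N) * δ)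
      (𝓝[>] (0:ℝ)) (𝓝 (c * Real.exp (max (a 2) (b 2) + 0) * dist a b + (M + N) * 0)) := by
    apply Tendsto.mono_left _ nhdsWithin_le_nhds
    exact Continuous.tendsto (by continuity) 0
  have hev : ∀ᶠ δ in 𝓝[>] (0:ℝ), dist (Z a) (Z b)
      ≤ c * Real.exp (max (a 2) (b 2) + δ) * dist a b + (M + N) * δ := by
    filter_upwards [Ioc_mem_nhdsGT_of_mem (Set.mem_Ico.2 ⟨le_refl (0:ℝ), one_pos⟩)] with δ hδ
    exact hb δ hδ
  have hle := ge_of_tendsto hcont hev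
  have hmax : Real.exp (max (a 2) (b 2)) = max (Real.exp (a 2)) (Real.exp (b 2)) :=
    Monotone.map_max (fun _ _ h => Real.exp_le_exp.2 h)
  calc dist (Z a) (Z b)
      ≤ c * Real.exp (max (a 2) (b 2) + 0) * dist a b + (M + N) * 0 := hle
    _ = c * max (Real.exp (a 2)) (Real.exp (b 2)) * dist a b := by
        rw [add_zero, hmax]; ring

lemma coord_continuous (i : Fin 3) : Continuous fun x : E3 => x i := by
  have : LipschitzWith 1 (fun x : E3 => x i) := by
    rw [lipschitzWith_iff_dist_le_mul]
    intro x y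
    rw [Real.dist_eq, dist_eq_norm, NNReal.coe_one, one_mul]
    have e : x i - y i = (x - y) i := rfl
    rw [e]
    exact abs_coord_le (x - y) i
  exact this.continuous

/-- Finite-increment estimate for iterates of a locally Lipschitz map `Z : ℝ³ → ℝ³` with
`‖DZ(x)‖ ≤ ν max{L,λ} e^{x₃}` a.e.: for `y₁, y₂ ∈ B(0,r)`,
`|Zⁿ(y₁) − Zⁿ(y₂)| ≤ ∏_{k<n} (sup_{B(0,r)} ν max{L,λ} e^{p₃(Zᵏ·)}) |y₁ − y₂|`, and if
`νλ sup_{B(0,r)} e^{p₃(Zⁿ·)} = E^{n+1}(r)` with `E(t) = νλe^t`, then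
`|Zⁿ(y₁) − Zⁿ(y₂)| ≤ (max{L,λ}/λ)ⁿ E(r)⋯Eⁿ(r) |y₁ − y₂|`. -/
theorem stmt15 (ν lam L r : ℝ) (hν : 0 < ν) (hlam : 0 < lam) (hL : 0 < L) (hr : 0 < r)
    (Z : EuclideanSpace ℝ (Fin 3) → EuclideanSpace ℝ (Fin 3))
    (hlip : LocallyLipschitz Z)
    (hder : ∀ᵐ x : EuclideanSpace ℝ (Fin 3) ∂volume,
      ‖fderiv ℝ Z x‖ ≤ ν * max L lam * Real.exp (x 2)) :
    (∀ y₁ ∈ Metric.ball (0 : EuclideanSpace ℝ (Fin 3)) r, ∀ y₂ ∈ Metric.ball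
        (0 : EuclideanSpace ℝ (Fin 3)) r, ∀ n : ℕ,
      dist (Z^[n] y₁) (Z^[n] y₂)
        ≤ (∏ k ∈ Finset.range n, ν * max L lam *
            sSup ((fun x => Real.exp (Z^[k] x 2)) ''
              Metric.ball (0 : EuclideanSpace ℝ (Fin 3)) r)) * dist y₁ y₂) ∧
      ((∀ n : ℕ, ν * lam * sSup ((fun x => Real.exp (Z^[n] x 2)) ''
          Metric.ball (0 : EuclideanSpace ℝ (Fin 3)) r)
          = (fun t : ℝ => ν * lam * Real.exp t)^[n + 1] r) →
        ∀ y₁ ∈ Metric.ball (0 : EuclideanSpace ℝ (Fin 3)) r, ∀ y₂ ∈ Metric.ball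
            (0 : EuclideanSpace ℝ (Fin 3)) r, ∀ n : ℕ,
          dist (Z^[n] y₁) (Z^[n] y₂)
            ≤ (max L lam / lam) ^ n *
              (∏ k ∈ Finset.range n, (fun t : ℝ => ν * lam * Real.exp t)^[k + 1] r) *
              dist y₁ y₂) := by
  have hmaxpos : 0 < max L lam := lt_max_of_lt_left hL
  have hc : (0:ℝ) ≤ ν * max L lam := by positivity
  set S : ℕ → ℝ := fun k => sSup ((fun x => Real.exp (Z^[k] x 2)) ''
      Metric.ball (0 : E3) r) with hSdef
  have hZc : Continuous Z := hlip.continuous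
  have hitc : ∀ k : ℕ, Continuous fun x : E3 => Real.exp (Z^[k] x 2) := fun k =>
    Real.continuous_exp.comp ((coord_continuous 2).comp (hZc.iterate k))
  have hS_le : ∀ k : ℕ, ∀ x ∈ Metric.ball (0:E3) r, Real.exp (Z^[k] x 2) ≤ S k := by
    intro k x hx
    apply le_csSup
    · exact (((isCompact_closedBall (0:E3) r).image (hitc k)).bddAbove).mono
        (Set.image_mono Metric.ball_subset_closedBall)
    · exact ⟨x, hx, rfl⟩
  have hcore : ∀ y₁ ∈ Metric.ball (0:E3) r, ∀ y₂ ∈ Metric.ball (0:E3) r, ∀ n : ℕ,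
      dist (Z^[n] y₁) (Z^[n] y₂) ≤ (∏ k ∈ Finset.range n, ν * max L lam * S k) * dist y₁ y₂ := by
    intro y₁ h₁ y₂ h₂ n
    induction n with
    | zero => simp
    | succ n ih =>
      have hSpos : (0:ℝ) ≤ S n := (Real.exp_pos _).le.trans (hS_le n y₁ h₁)
      have hstep := mvt_ae hlip hc hder (Z^[n] y₁) (Z^[n] y₂)
      rw [Function.iterate_succ_apply', Function.iterate_succ_apply']
      have hmax_le : max (Real.exp ((Z^[n] y₁) 2)) (Real.exp ((Z^[n] y₂) 2)) ≤ S n :=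
        max_le (hS_le n y₁ h₁) (hS_le n y₂ h₂)
      calc dist (Z (Z^[n] y₁)) (Z (Z^[n] y₂))
          ≤ ν * max L lam * max (Real.exp ((Z^[n] y₁) 2)) (Real.exp ((Z^[n] y₂) 2))
            * dist (Z^[n] y₁) (Z^[n] y₂) := hstep
        _ ≤ (ν * max L lam * S n) * ((∏ k ∈ Finset.range n, ν * max L lam * S k) * dist y₁ y₂) := by
            apply mul_le_mul (mul_le_mul_of_nonneg_left hmax_le hc) ih dist_nonneg
            positivity
        _ = (∏ k ∈ Finset.range (n+1), ν * max L lam * S k) * dist y₁ y₂ := by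
            rw [Finset.prod_range_succ]
            ring
  refine ⟨hcore, fun hE y₁ h₁ y₂ h₂ n => ?_⟩
  have h := hcore y₁ h₁ y₂ h₂ n
  have hlam0 : lam ≠ 0 := ne_of_gt hlam
  have hprod : (∏ k ∈ Finset.range n, ν * max L lam * S k)
      = (max L lam / lam) ^ n *
        ∏ k ∈ Finset.range n, (fun t : ℝ => ν * lam * Real.exp t)^[k + 1] r := by
    calc (∏ k ∈ Finset.range n, ν * max L lam * S k)
        = ∏ k ∈ Finset.range n,
            (max L lam / lam) * ((fun t : ℝ => ν * lam * Real.exp t)^[k + 1] r) := by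
          refine Finset.prod_congr rfl fun k _ => ?_
          rw [← hE k]
          field_simp
          ring
      _ = (max L lam / lam) ^ n *
            ∏ k ∈ Finset.range n, (fun t : ℝ => ν * lam * Real.exp t)^[k + 1] r := by
          rw [Finset.prod_mul_distrib, Finset.prod_const, Finset.card_range]
  rw [hprod] at h
  rw [mul_assoc] at h ⊢
  exact h
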